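/- For every sequence ω = ω^0ω^1… ∈ (D_b^m)^{ℕ₀} and every integer k ≥ m, the cardinality of Σ_k^ω equals the norm of the matrix product: |Σ_k^ω| = ‖A_{ω^0} A_{ω^1} ⋯ A_{ω^{k−m}}‖. -/

import Mathlib

open MeasureTheory Filter

namespace Paper


/-- The set `Σ_k^ω` of admissible words of length `k`. -/
def SigmaSet (b m : ℕ) (ω : ℕ → Fin m → Fin b) (k : ℕ) : Set (Fin k → Fin b) :=
  { d | ∀ (i : ℕ) (hi : i + m ≤ k),
      (fun j : Fin m => d ⟨i + j.1, by have := j.isLt; omega⟩) ≠ ω i }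

/-- The survivor set `K^ω ⊆ [0,1]`. -/
def Kset (b m : ℕ) (ω : ℕ → Fin m → Fin b) : Set ℝ :=
  { x | ∃ d : ℕ → Fin b,
      (∀ k : ℕ, (fun j : Fin m => d (k + j.1)) ≠ ω k) ∧
      x = ∑' i : ℕ, ((d i : ℕ) : ℝ) / (b : ℝ) ^ (i + 1) }

open Classical in
/-- The adjacency matrix `A_d` of the subshift of finite type with forbidden word `d`. -/
noncomputable def adjMat (b m : ℕ) (d : Fin m → Fin b) :
    Matrix (Fin (m - 1) → Fin b) (Fin (m - 1) → Fin b) ℝ :=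
  fun u v =>
    if ((∀ (i : ℕ) (h : i + 1 < m - 1), u ⟨i + 1, h⟩ = v ⟨i, by omega⟩) ∧
        ¬ ((∀ (j : ℕ) (h : j < m - 1), u ⟨j, h⟩ = d ⟨j, by omega⟩) ∧
           (∀ (h2 : m - 2 < m - 1), v ⟨m - 2, h2⟩ = d ⟨m - 1, by omega⟩)))
    then 1 else 0

/-- The norm `‖M‖ = ∑_{i,j} |m_{ij}|` of a real square matrix. -/
noncomputable def matNorm {n : Type*} [Fintype n] (M : Matrix n n ℝ) : ℝ :=
  ∑ i, ∑ j, |M i j|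

/-- The product `A_{ω^0} A_{ω^1} ⋯ A_{ω^{n-1}}`. -/
noncomputable def prodA (b m : ℕ) (ω : ℕ → Fin m → Fin b) (n : ℕ) :
    Matrix (Fin (m - 1) → Fin b) (Fin (m - 1) → Fin b) ℝ :=
  ((List.range n).map (fun i => adjMat b m (ω i))).prod

/-- `ω` is progressively overlapping at position `k`. -/
def ProgOverlapAt (b m : ℕ) (ω : ℕ → Fin m → Fin b) (k : ℕ) : Prop :=
  ∀ j : ℕ, 1 ≤ j → j ≤ min k (m - 1) →
    ∀ (t : ℕ) (h : t + j < m),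
      ω k ⟨t, by omega⟩ = ω (k - j) ⟨t + j, h⟩

/-- `ω` is totally distinct at position `k`. -/
def TotDistinctAt (b m : ℕ) (ω : ℕ → Fin m → Fin b) (k : ℕ) : Prop :=
  ∀ j : ℕ, 1 ≤ j → j ≤ min k (m - 1) →
    ¬ (∀ (t : ℕ) (h : t + j < m),
        ω k ⟨t, by omega⟩ = ω (k - j) ⟨t + j, h⟩)

/-- A set `F ⊆ ℝ` is `s`-Ahlfors regular. -/
def AhlforsRegular (F : Set ℝ) (s : ℝ) : Prop :=
  ∃ c : ℝ, 1 ≤ c ∧ ∀ x ∈ F, ∀ r : ℝ, 0 < r → r < 1 →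
    ENNReal.ofReal (c⁻¹ * r ^ s) ≤ Measure.hausdorffMeasure s (F ∩ Metric.closedBall x r) ∧
    Measure.hausdorffMeasure s (F ∩ Metric.closedBall x r) ≤ ENNReal.ofReal (c * r ^ s)


-- auxiliary
open Classical Finset

def pre (b m : ℕ) {k : ℕ} (hk : m ≤ k) (d : Fin k → Fin b) : Fin (m-1) → Fin b :=
  fun j => d ⟨j.1, by have := j.isLt; omega⟩

def suf (b m : ℕ) {k : ℕ} (hk : m ≤ k) (d : Fin k → Fin b) : Fin (m-1) → Fin b :=
  fun j => d ⟨k - m + 1 + j.1, by have := j.isLt; omega⟩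

lemma prodA_succ (b m : ℕ) (ω : ℕ → Fin m → Fin b) (n : ℕ) :
    prodA b m ω (n+1) = prodA b m ω n * adjMat b m (ω n) := by
  simp [prodA, List.range_succ]

lemma prodA_one (b m : ℕ) (ω : ℕ → Fin m → Fin b) :
    prodA b m ω 1 = adjMat b m (ω 0) := by
  simp [prodA, List.range_succ]

lemma fin_congr {n : ℕ} {α : Sort*} (x : Fin n → α) {a a' : ℕ} {p : a < n} {p' : a' < n}
    (h : a = a') : x ⟨a, p⟩ = x ⟨a', p'⟩ := by subst h; rfl

lemma mem_sigma_m {b m : ℕ} (hm : 2 ≤ m) (ω : ℕ → Fin m → Fin b) (d : Fin m → Fin b) :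
    d ∈ SigmaSet b m ω m ↔ d ≠ ω 0 := by
  constructor
  · intro hd
    have h0 := hd 0 (by omega)
    intro hdo
    apply h0
    funext j
    rw [← hdo]
    exact fin_congr d (by omega)
  · intro hd i hi
    have : i = 0 := by omega
    subst this
    intro hco
    apply hd
    funext j
    rw [← hco]
    exact fin_congr d (by omega)

def baseWord (b m : ℕ) (hm : 2 ≤ m) (u v : Fin (m-1) → Fin b) : Fin m → Fin b :=
  fun i => if h : i.1 < m - 1 then u ⟨i.1, h⟩ else v ⟨m - 2, by omega⟩

lemma baseWord_lt {b m : ℕ} (hm : 2 ≤ m) (u v : Fin (m-1) → Fin b) (t : ℕ)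
    (h : t < m - 1) (h' : t < m) : baseWord b m hm u v ⟨t, h'⟩ = u ⟨t, h⟩ := dif_pos h

lemma baseWord_last {b m : ℕ} (hm : 2 ≤ m) (u v : Fin (m-1) → Fin b) (t : ℕ)
    (h1 : t < m) (h : ¬ t < m - 1) :
    baseWord b m hm u v ⟨t, h1⟩ = v ⟨m - 2, by omega⟩ := dif_neg h

lemma suf_apply {b m k : ℕ} (hk : m ≤ k) (d : Fin k → Fin b) (j : ℕ) (h : j < m - 1) :
    suf b m hk d ⟨j, h⟩ = d ⟨k - m + 1 + j, by omega⟩ := rfl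

lemma pre_apply {b m k : ℕ} (hk : m ≤ k) (d : Fin k → Fin b) (j : ℕ) (h : j < m - 1) :
    pre b m hk d ⟨j, h⟩ = d ⟨j, by omega⟩ := rfl

lemma key_base {b m : ℕ} (hm : 2 ≤ m) (ω : ℕ → Fin m → Fin b) (u v : Fin (m-1) → Fin b)
    (d : Fin m → Fin b) :
    (d ∈ SigmaSet b m ω m ∧ pre b m le_rfl d = u ∧ suf b m le_rfl d = v) ↔
    (((∀ (i : ℕ) (h : i + 1 < m - 1), u ⟨i + 1, h⟩ = v ⟨i, by omega⟩) ∧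
        ¬ ((∀ (j : ℕ) (h : j < m - 1), u ⟨j, h⟩ = (ω 0) ⟨j, by omega⟩) ∧
           (∀ (h2 : m - 2 < m - 1), v ⟨m - 2, h2⟩ = (ω 0) ⟨m - 1, by omega⟩)))
      ∧ d = baseWord b m hm u v) := by
  rw [mem_sigma_m hm]
  constructor
  · rintro ⟨hd, hpre, hsuf⟩
    have hp : ∀ (j : ℕ) (h : j < m - 1), d ⟨j, by omega⟩ = u ⟨j, h⟩ := by
      intro j h
      rw [← hpre]
      rfl
    have hs : ∀ (j : ℕ) (h : j < m - 1), d ⟨1 + j, by omega⟩ = v ⟨j, h⟩ := by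
      intro j h
      rw [← hsuf, suf_apply]
      exact fin_congr d (by omega)
    refine ⟨⟨?_, ?_⟩, ?_⟩
    · intro i h
      rw [← hp (i+1) h, ← hs i (by omega)]
      exact fin_congr d (by omega)
    · rintro ⟨hu, hv⟩
      apply hd
      funext i
      rcases Nat.lt_or_ge i.1 (m-1) with h | h
      · have e1 : d i = d ⟨i.1, by omega⟩ := fin_congr d rfl
        rw [e1, hp i.1 h, hu i.1 h]
      · have e1 : d i = d ⟨1 + (m-2), by omega⟩ := fin_congr d (by have := i.isLt; omega)
        rw [e1, hs (m-2) (by omega), hv (by omega)]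
        exact fin_congr (ω 0) (by have := i.isLt; omega)
    · funext i
      have hi := i.isLt
      rcases Nat.lt_or_ge i.1 (m-1) with h | h
      · have e2 : baseWord b m hm u v i = u ⟨i.1, h⟩ := baseWord_lt hm u v i.1 h i.isLt
        rw [e2, ← hp i.1 h]
      · have e2 : baseWord b m hm u v i = v ⟨m-2, by omega⟩ := baseWord_last hm u v i.1 i.isLt (by omega)
        rw [e2, ← hs (m-2) (by omega)]
        exact fin_congr d (by omega)
  · rintro ⟨⟨hov, hneg⟩, rfl⟩
    refine ⟨?_, ?_, ?_⟩
    · intro heq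
      apply hneg
      constructor
      · intro j h
        rw [← baseWord_lt hm u v j h (by omega), heq]
      · intro h2
        have e1 : v ⟨m-2, h2⟩ = baseWord b m hm u v ⟨m-1, by omega⟩ :=
          (baseWord_last hm u v (m-1) (by omega) (by omega)).symm
        rw [e1, heq]
    · funext j
      have := j.isLt
      show baseWord b m hm u v ⟨j.1, by omega⟩ = u j
      rw [baseWord_lt hm u v j.1 j.isLt (by omega)]
    · funext j
      have hj := j.isLt
      show baseWord b m hm u v ⟨m - m + 1 + j.1, by omega⟩ = v j
      rcases Nat.lt_or_ge (m - m + 1 + j.1) (m-1) with h | h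
      · rw [baseWord_lt hm u v _ h (by omega)]
        have e1 : u ⟨m - m + 1 + j.1, h⟩ = u ⟨j.1 + 1, by omega⟩ := fin_congr u (by omega)
        rw [e1, hov j.1 (by omega)]
      · rw [baseWord_last hm u v _ (by omega) (by omega)]
        exact fin_congr v (by omega)

open Classical in
lemma entry_base {b m : ℕ} (hm : 2 ≤ m) (ω : ℕ → Fin m → Fin b) (u v : Fin (m-1) → Fin b) :
    adjMat b m (ω 0) u v =
      ((Finset.univ.filter (fun d : Fin m → Fin b =>
        d ∈ SigmaSet b m ω m ∧ pre b m le_rfl d = u ∧ suf b m le_rfl d = v)).card : ℝ) := by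
  rw [Finset.filter_congr (fun d _ => key_base hm ω u v d)]
  simp only [adjMat]
  by_cases hC : ((∀ (i : ℕ) (h : i + 1 < m - 1), u ⟨i + 1, h⟩ = v ⟨i, by omega⟩) ∧
        ¬ ((∀ (j : ℕ) (h : j < m - 1), u ⟨j, h⟩ = (ω 0) ⟨j, by omega⟩) ∧
           (∀ (h2 : m - 2 < m - 1), v ⟨m - 2, h2⟩ = (ω 0) ⟨m - 1, by omega⟩)))
  · rw [if_pos hC, Finset.filter_congr
      (fun d _ => (and_iff_right hC : (_ ∧ d = baseWord b m hm u v) ↔ _)),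
      Finset.filter_eq']
    simp
  · rw [if_neg hC, Finset.filter_congr
      (fun d _ => (iff_false_intro (fun h => hC h.1) : (_ ∧ d = baseWord b m hm u v) ↔ False))]
    simp

def ext (b : ℕ) {k : ℕ} (e : Fin k → Fin b) (a : Fin b) : Fin (k+1) → Fin b :=
  fun i => if h : i.1 < k then e ⟨i.1, h⟩ else a

lemma ext_apply_lt {b k : ℕ} (e : Fin k → Fin b) (a : Fin b) {t : ℕ} (h : t < k)
    (h' : t < k+1) : ext b e a ⟨t, h'⟩ = e ⟨t, h⟩ := dif_pos h

lemma ext_apply_last {b k : ℕ} (e : Fin k → Fin b) (a : Fin b) {t : ℕ} (h : ¬ t < k)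
    (h' : t < k+1) : ext b e a ⟨t, h'⟩ = a := dif_neg h

def EdgeC (b m : ℕ) (w v : Fin (m-1) → Fin b) (c : Fin m → Fin b) : Prop :=
  (∀ (i : ℕ) (h : i + 1 < m - 1), w ⟨i + 1, h⟩ = v ⟨i, by omega⟩) ∧
  ¬ ((∀ (j : ℕ) (h : j < m - 1), w ⟨j, h⟩ = c ⟨j, by omega⟩) ∧
     (∀ (h2 : m - 2 < m - 1), v ⟨m - 2, h2⟩ = c ⟨m - 1, by omega⟩))

lemma adjMat_eq {b m : ℕ} (c : Fin m → Fin b) (w v : Fin (m-1) → Fin b) :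
    adjMat b m c w v = if EdgeC b m w v c then 1 else 0 := by
  unfold adjMat EdgeC
  congr

lemma sigma_ext {b m k : ℕ} (hk : m ≤ k) (ω : ℕ → Fin m → Fin b)
    (e : Fin k → Fin b) (a : Fin b) :
    ext b e a ∈ SigmaSet b m ω (k+1) ↔
    (e ∈ SigmaSet b m ω k ∧
      ¬ ((fun j : Fin m => ext b e a ⟨k + 1 - m + j.1, by have := j.isLt; omega⟩) = ω (k+1-m))) := by
  constructor
  · intro h
    refine ⟨?_, ?_⟩
    · intro i hi hcon
      apply h i (by omega)
      funext j
      rw [← congrFun hcon j]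
      exact ext_apply_lt e a (by have := j.isLt; omega) _
    · exact h (k+1-m) (by omega)
  · rintro ⟨he, hlast⟩ i hi hcon
    rcases Nat.lt_or_ge (i + m) (k + 1) with h | h
    · apply he i (by omega)
      funext j
      rw [← congrFun hcon j]
      exact (ext_apply_lt e a (by have := j.isLt; omega) _).symm
    · have : i = k + 1 - m := by omega
      subst this
      exact hlast hcon

lemma win_lt {b m k : ℕ} (hm : 2 ≤ m) (hk : m ≤ k) (e : Fin k → Fin b) (a : Fin b)
    (j : ℕ) (h : j < m - 1) (pf : k + 1 - m + j < k + 1) :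
    ext b e a ⟨k + 1 - m + j, pf⟩ = suf b m hk e ⟨j, h⟩ := by
  rw [suf_apply]
  exact (ext_apply_lt e a (by omega) _).trans (fin_congr e (by omega))

lemma win_last {b m k : ℕ} (hm : 2 ≤ m) (hk : m ≤ k) (e : Fin k → Fin b) (a : Fin b)
    (pf : k + 1 - m + (m - 1) < k + 1) :
    ext b e a ⟨k + 1 - m + (m - 1), pf⟩ = a :=
  (fin_congr (ext b e a) (p' := by omega) (show k + 1 - m + (m - 1) = k by omega)).trans
    (ext_apply_last e a (by omega) (by omega))

lemma window_iff {b m k : ℕ} (hm : 2 ≤ m) (hk : m ≤ k) (e : Fin k → Fin b) (a : Fin b)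
    (c : Fin m → Fin b) :
    (fun j : Fin m => ext b e a ⟨k + 1 - m + j.1, by have := j.isLt; omega⟩) = c ↔
    ((∀ (j : ℕ) (h : j < m - 1), suf b m hk e ⟨j, h⟩ = c ⟨j, by omega⟩) ∧
      a = c ⟨m - 1, by omega⟩) := by
  constructor
  · intro hw
    refine ⟨?_, ?_⟩
    · intro j h
      exact (win_lt hm hk e a j h (by omega)).symm.trans (congrFun hw ⟨j, by omega⟩)
    · exact (win_last hm hk e a (by omega)).symm.trans (congrFun hw ⟨m - 1, by omega⟩)
  · rintro ⟨h1, h2⟩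
    funext j
    show ext b e a ⟨k + 1 - m + j.1, by have := j.isLt; omega⟩ = c j
    rcases Nat.lt_or_ge j.1 (m-1) with h | h
    · exact (win_lt hm hk e a j.1 h _).trans (h1 j.1 h)
    · have hj : j.1 = m - 1 := by have := j.isLt; omega
      exact ((fin_congr (ext b e a) (p' := by omega) (show k + 1 - m + j.1 = k by omega)).trans
        (ext_apply_last e a (by omega) (by omega))).trans (h2.trans (fin_congr c hj.symm))

lemma sufext_lt {b m k : ℕ} (hm : 2 ≤ m) (hk : m ≤ k) (e : Fin k → Fin b) (a : Fin b)
    (j : ℕ) (h : j + 1 < m - 1) (pf : j < m - 1) :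
    suf b m (show m ≤ k + 1 by omega) (ext b e a) ⟨j, pf⟩ = suf b m hk e ⟨j + 1, h⟩ := by
  rw [suf_apply, suf_apply]
  exact (ext_apply_lt e a (by omega) _).trans (fin_congr e (by omega))

lemma sufext_last {b m k : ℕ} (hm : 2 ≤ m) (hk : m ≤ k) (e : Fin k → Fin b) (a : Fin b)
    (pf : m - 2 < m - 1) :
    suf b m (show m ≤ k + 1 by omega) (ext b e a) ⟨m - 2, pf⟩ = a := by
  rw [suf_apply]
  exact (fin_congr (ext b e a) (p' := by omega) (show k + 1 - m + 1 + (m-2) = k by omega)).trans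
    (ext_apply_last e a (by omega) (by omega))

lemma pre_ext {b m k : ℕ} (hm : 2 ≤ m) (hk : m ≤ k) (e : Fin k → Fin b) (a : Fin b) :
    pre b m (show m ≤ k + 1 by omega) (ext b e a) = pre b m hk e := by
  funext j
  have hj := j.isLt
  show ext b e a ⟨j.1, by omega⟩ = pre b m hk e j
  exact (ext_apply_lt e a (by omega) _).trans (fin_congr e rfl)

lemma suf_ext_iff {b m k : ℕ} (hm : 2 ≤ m) (hk : m ≤ k) (e : Fin k → Fin b) (a : Fin b)
    (v : Fin (m-1) → Fin b) :
    suf b m (show m ≤ k + 1 by omega) (ext b e a) = v ↔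
    ((∀ (i : ℕ) (h : i + 1 < m - 1), suf b m hk e ⟨i + 1, h⟩ = v ⟨i, by omega⟩) ∧
      a = v ⟨m - 2, by omega⟩) := by
  constructor
  · intro hs
    refine ⟨?_, ?_⟩
    · intro i h
      exact (sufext_lt hm hk e a i h (by omega)).symm.trans (congrFun hs ⟨i, by omega⟩)
    · exact (sufext_last hm hk e a (by omega)).symm.trans (congrFun hs ⟨m - 2, by omega⟩)
  · rintro ⟨hov, ha⟩
    funext j
    have hj := j.isLt
    rcases Nat.lt_or_ge j.1 (m - 2) with h | h
    · exact (sufext_lt hm hk e a j.1 (by omega) (by omega)).trans (hov j.1 (by omega))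
    · have hj2 : j.1 = m - 2 := by omega
      exact ((fin_congr (suf b m (show m ≤ k + 1 by omega) (ext b e a)) hj2).trans
        (sufext_last hm hk e a (by omega))).trans (ha.trans (fin_congr v hj2.symm))

lemma P_ext_iff {b m k : ℕ} (hm : 2 ≤ m) (hk : m ≤ k) (ω : ℕ → Fin m → Fin b)
    (u v : Fin (m-1) → Fin b) (e : Fin k → Fin b) (a : Fin b) :
    (ext b e a ∈ SigmaSet b m ω (k+1) ∧
      pre b m (show m ≤ k + 1 by omega) (ext b e a) = u ∧
      suf b m (show m ≤ k + 1 by omega) (ext b e a) = v) ↔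
    ((e ∈ SigmaSet b m ω k ∧ pre b m hk e = u ∧
        EdgeC b m (suf b m hk e) v (ω (k + 1 - m))) ∧
      a = v ⟨m - 2, by omega⟩) := by
  rw [sigma_ext hk, window_iff hm hk, pre_ext hm hk, suf_ext_iff hm hk]
  unfold EdgeC
  constructor
  · rintro ⟨⟨he, hw⟩, hpre, hov, ha⟩
    exact ⟨⟨he, hpre, hov, fun hc => hw ⟨hc.1, ha.trans (hc.2 (by omega))⟩⟩, ha⟩
  · rintro ⟨⟨he, hpre, hov, hne⟩, ha⟩
    exact ⟨⟨he, fun hc => hne ⟨hc.1, fun h2 => ha.symm.trans hc.2⟩⟩, hpre, hov, ha⟩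

def restrict (b : ℕ) {k : ℕ} (d : Fin (k+1) → Fin b) : Fin k → Fin b :=
  fun i => d ⟨i.1, by have := i.isLt; omega⟩

lemma ext_restrict {b k : ℕ} (d : Fin (k+1) → Fin b) (a : Fin b)
    (ha : d ⟨k, by omega⟩ = a) : ext b (restrict b d) a = d := by
  funext i
  rcases Nat.lt_or_ge i.1 k with h | h
  · exact (ext_apply_lt _ _ h i.isLt).trans (fin_congr d rfl)
  · exact (ext_apply_last _ _ (by omega) i.isLt).trans
      (ha.symm.trans (fin_congr d (by have := i.isLt; omega)))

lemma restrict_ext {b k : ℕ} (e : Fin k → Fin b) (a : Fin b) :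
    restrict b (ext b e a) = e := by
  funext i
  exact (ext_apply_lt e a i.isLt _).trans (fin_congr e rfl)

lemma suf_last {b m k : ℕ} (hm : 2 ≤ m) (hk : m ≤ k) (d : Fin (k+1) → Fin b)
    (v : Fin (m-1) → Fin b) (hs : suf b m (show m ≤ k + 1 by omega) d = v) :
    d ⟨k, by omega⟩ = v ⟨m - 2, by omega⟩ := by
  rw [← hs, suf_apply]
  exact fin_congr d (by omega)

open Classical in
lemma step_count {b m k : ℕ} (hm : 2 ≤ m) (hk : m ≤ k) (ω : ℕ → Fin m → Fin b)
    (u v : Fin (m-1) → Fin b) :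
    (Finset.univ.filter (fun d : Fin (k+1) → Fin b =>
       d ∈ SigmaSet b m ω (k+1) ∧ pre b m (show m ≤ k + 1 by omega) d = u ∧
       suf b m (show m ≤ k + 1 by omega) d = v)).card
    = ∑ w : Fin (m-1) → Fin b, if EdgeC b m w v (ω (k + 1 - m)) then
        (Finset.univ.filter (fun e : Fin k → Fin b =>
          e ∈ SigmaSet b m ω k ∧ pre b m hk e = u ∧ suf b m hk e = w)).card else 0 := by
  have hAB : (Finset.univ.filter (fun d : Fin (k+1) → Fin b =>
       d ∈ SigmaSet b m ω (k+1) ∧ pre b m (show m ≤ k + 1 by omega) d = u ∧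
       suf b m (show m ≤ k + 1 by omega) d = v)).card
      = (Finset.univ.filter (fun e : Fin k → Fin b =>
          e ∈ SigmaSet b m ω k ∧ pre b m hk e = u ∧
          EdgeC b m (suf b m hk e) v (ω (k + 1 - m)))).card := by
    apply Finset.card_nbij' (i := fun d => restrict b d)
      (j := fun e => ext b e (v ⟨m - 2, by omega⟩))
    · intro d hd
      simp only [Finset.mem_coe, Finset.mem_filter, Finset.mem_univ, true_and] at hd ⊢
      have ha : d ⟨k, by omega⟩ = v ⟨m - 2, by omega⟩ := suf_last hm hk d v hd.2.2
      have hrw : ext b (restrict b d) (v ⟨m - 2, by omega⟩) = d := ext_restrict d _ ha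
      have hP := (P_ext_iff hm hk ω u v (restrict b d) (v ⟨m - 2, by omega⟩)).mp
        (by rw [hrw]; exact hd)
      exact hP.1
    · intro e he
      simp only [Finset.mem_coe, Finset.mem_filter, Finset.mem_univ, true_and] at he ⊢
      exact ((P_ext_iff hm hk ω u v e (v ⟨m - 2, by omega⟩)).mpr ⟨he, rfl⟩)
    · intro d hd
      simp only [Finset.mem_coe, Finset.mem_filter, Finset.mem_univ, true_and] at hd
      exact ext_restrict d _ (suf_last hm hk d v hd.2.2)
    · intro e _
      exact restrict_ext e _
  rw [hAB, Finset.card_eq_sum_card_fiberwise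
    (f := fun e => suf b m hk e) (t := Finset.univ) (fun x _ => Finset.mem_univ _)]
  refine Finset.sum_congr rfl (fun w _ => ?_)
  rw [Finset.filter_filter]
  by_cases hE : EdgeC b m w v (ω (k + 1 - m))
  · rw [if_pos hE]
    apply congrArg
    apply Finset.filter_congr
    intro e _
    constructor
    · rintro ⟨⟨h1, h2, _⟩, h4⟩
      exact ⟨h1, h2, h4⟩
    · rintro ⟨h1, h2, h3⟩
      exact ⟨⟨h1, h2, by rw [h3]; exact hE⟩, h3⟩
  · rw [if_neg hE]
    rw [Finset.card_eq_zero]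
    apply Finset.filter_false_of_mem
    rintro e _ ⟨⟨_, _, hE'⟩, h4⟩
    exact hE (h4 ▸ hE')

open Classical in
lemma entry {b m : ℕ} (hm : 2 ≤ m) (ω : ℕ → Fin m → Fin b) (k : ℕ) (hk : m ≤ k)
    (u v : Fin (m-1) → Fin b) :
    prodA b m ω (k - m + 1) u v =
      ((Finset.univ.filter (fun d : Fin k → Fin b =>
        d ∈ SigmaSet b m ω k ∧ pre b m hk d = u ∧ suf b m hk d = v)).card : ℝ) := by
  induction k, hk using Nat.le_induction generalizing u v with
  | base =>
    rw [show m - m + 1 = 1 by omega, prodA_one]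
    exact entry_base hm ω u v
  | succ k hk ih =>
    rw [show k + 1 - m + 1 = (k - m + 1) + 1 by omega, prodA_succ, Matrix.mul_apply]
    have hterm : ∀ w : Fin (m-1) → Fin b,
        prodA b m ω (k - m + 1) u w * adjMat b m (ω (k - m + 1)) w v
        = (((if EdgeC b m w v (ω (k + 1 - m)) then
            (Finset.univ.filter (fun e : Fin k → Fin b =>
              e ∈ SigmaSet b m ω k ∧ pre b m hk e = u ∧ suf b m hk e = w)).card else 0 : ℕ)) : ℝ) := by
      intro w
      rw [ih u w, adjMat_eq, show k - m + 1 = k + 1 - m by omega]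
      by_cases hE : EdgeC b m w v (ω (k + 1 - m))
      · rw [if_pos hE, if_pos hE, mul_one]
      · rw [if_neg hE, if_neg hE, mul_zero, Nat.cast_zero]
    rw [Finset.sum_congr rfl (fun w _ => hterm w), ← Nat.cast_sum]
    rw [step_count hm hk ω u v]

open Classical in
lemma total_count {b m : ℕ} (ω : ℕ → Fin m → Fin b) (k : ℕ) (hk : m ≤ k) :
    (Finset.univ.filter (fun d : Fin k → Fin b => d ∈ SigmaSet b m ω k)).card
    = ∑ u : Fin (m-1) → Fin b, ∑ v : Fin (m-1) → Fin b,
        (Finset.univ.filter (fun d : Fin k → Fin b =>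
          d ∈ SigmaSet b m ω k ∧ pre b m hk d = u ∧ suf b m hk d = v)).card := by
  rw [Finset.card_eq_sum_card_fiberwise
    (f := fun d => (pre b m hk d, suf b m hk d)) (t := Finset.univ)
    (fun x _ => Finset.mem_univ _), Fintype.sum_prod_type]
  refine Finset.sum_congr rfl fun u _ => Finset.sum_congr rfl fun v _ => ?_
  rw [Finset.filter_filter]
  apply congrArg
  apply Finset.filter_congr
  intro d _
  rw [Prod.mk.injEq]


/-- **Lemma 2.3.** For every `ω` and `k ≥ m`,
`|Σ_k^ω| = ‖A_{ω^0} A_{ω^1} ⋯ A_{ω^{k-m}}‖`. -/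
theorem card_sigma_eq_matNorm (b m : ℕ) (hb : 3 ≤ b) (hm : 2 ≤ m)
    (ω : ℕ → Fin m → Fin b) (k : ℕ) (hk : m ≤ k) :
    (Nat.card ↥(SigmaSet b m ω k) : ℝ) = matNorm (prodA b m ω (k - m + 1)) := by
  classical
  have h1 : Nat.card ↥(SigmaSet b m ω k)
      = (Finset.univ.filter (fun d : Fin k → Fin b => d ∈ SigmaSet b m ω k)).card := by
    rw [Nat.card_eq_fintype_card, ← Set.toFinset_card]
    congr 1
    ext d
    simp [Set.mem_toFinset]
  have h2 : matNorm (prodA b m ω (k - m + 1)) = ∑ u : Fin (m-1) → Fin b,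
      ∑ v : Fin (m-1) → Fin b, ((Finset.univ.filter (fun d : Fin k → Fin b =>
        d ∈ SigmaSet b m ω k ∧ pre b m hk d = u ∧ suf b m hk d = v)).card : ℝ) := by
    unfold matNorm
    refine Finset.sum_congr rfl fun u _ => Finset.sum_congr rfl fun v _ => ?_
    rw [entry hm ω k hk u v]
    exact Nat.abs_cast _
  rw [h1, h2, total_count ω k hk]
  push_cast
  rfl

end Paper
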